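/- For a ∈ ℂ^N, the vector space W(a) with basis indexed by K = {k ∈ ℤ^N : if a_i ∈ ℤ then (a_i + k_i < 0 ⟺ a_i < 0)} and the prescribed actions of q_i and p_i is a simple module over the Weyl algebra W_N. -/

import Mathlib

open scoped Classical

/-- The index set `K = {k ∈ ℤ^N : a_i ∈ ℤ → (a_i + k_i < 0 ↔ a_i < 0)}`. -/
def weylK {N : ℕ} (a : Fin N → ℂ) : Set (Fin N → ℤ) :=
  {k | ∀ i : Fin N, ∀ m : ℤ, a i = (m : ℂ) → (m + k i < 0 ↔ m < 0)}

/-- The underlying space `W(a)`, with basis `x(k) = Finsupp.single k 1` indexed by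
`k ∈ K`. -/
abbrev weylW {N : ℕ} (a : Fin N → ℂ) : Type := ↥(weylK a) →₀ ℂ

/-- The action of the generator `q_i` of the Weyl algebra `W_N` on `W(a)`:
`q_i · x(k) = (a_i + k_i + 1) x(k + ε_i)` if `a_i ∈ ℤ_{<0}`, `q_i · x(k) = x(k + ε_i)`
otherwise, with the convention `x(k') = 0` for `k' ∉ K`. -/
noncomputable def weylQ {N : ℕ} (a : Fin N → ℂ) (i : Fin N) : Module.End ℂ (weylW a) :=
  Finsupp.lsum ℂ fun k : ↥(weylK a) =>
    (if ∃ m : ℤ, m < 0 ∧ a i = (m : ℂ) then a i + ((k : Fin N → ℤ) i : ℂ) + 1 else 1) •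
      (if h : ((k : Fin N → ℤ) + Pi.single i 1) ∈ weylK a
        then Finsupp.lsingle (⟨_, h⟩ : ↥(weylK a)) else 0)

/-- The action of the generator `p_i` of the Weyl algebra `W_N` on `W(a)`:
`p_i · x(k) = x(k − ε_i)` if `a_i ∈ ℤ_{<0}`, `p_i · x(k) = (a_i + k_i) x(k − ε_i)`
otherwise, with the convention `x(k') = 0` for `k' ∉ K`. -/
noncomputable def weylP {N : ℕ} (a : Fin N → ℂ) (i : Fin N) : Module.End ℂ (weylW a) :=
  Finsupp.lsum ℂ fun k : ↥(weylK a) =>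
    (if ∃ m : ℤ, m < 0 ∧ a i = (m : ℂ) then 1 else a i + ((k : Fin N → ℤ) i : ℂ)) •
      (if h : ((k : Fin N → ℤ) - Pi.single i 1) ∈ weylK a
        then Finsupp.lsingle (⟨_, h⟩ : ↥(weylK a)) else 0)


namespace WeylAux

variable {N : ℕ} (a : Fin N → ℂ)

/-- coefficient of q_i -/
noncomputable def cQ (i : Fin N) (k : Fin N → ℤ) : ℂ :=
  if ∃ m : ℤ, m < 0 ∧ a i = (m : ℂ) then a i + (k i : ℂ) + 1 else 1

/-- coefficient of p_i -/
noncomputable def cP (i : Fin N) (k : Fin N → ℤ) : ℂ :=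
  if ∃ m : ℤ, m < 0 ∧ a i = (m : ℂ) then 1 else a i + (k i : ℂ)

lemma cQ_congr {i : Fin N} {k k' : Fin N → ℤ} (h : k i = k' i) : cQ a i k = cQ a i k' := by
  simp [cQ, h]

lemma cP_congr {i : Fin N} {k k' : Fin N → ℤ} (h : k i = k' i) : cP a i k = cP a i k' := by
  simp [cP, h]

lemma weylQ_single (i : Fin N) (k : ↥(weylK a)) (c : ℂ) :
    weylQ a i (Finsupp.single k c) =
      cQ a i k • (if h : ((k : Fin N → ℤ) + Pi.single i 1) ∈ weylK a
        then Finsupp.single (⟨_, h⟩ : ↥(weylK a)) c else 0) := by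
  rw [weylQ, Finsupp.lsum_single]
  split_ifs with h <;> simp [cQ, h]

lemma weylP_single (i : Fin N) (k : ↥(weylK a)) (c : ℂ) :
    weylP a i (Finsupp.single k c) =
      cP a i k • (if h : ((k : Fin N → ℤ) - Pi.single i 1) ∈ weylK a
        then Finsupp.single (⟨_, h⟩ : ↥(weylK a)) c else 0) := by
  rw [weylP, Finsupp.lsum_single]
  split_ifs with h <;> simp [cP, h]

lemma keyQ0 {i : Fin N} {k : Fin N → ℤ} (hk : k ∈ weylK a)
    (h : (k + Pi.single i 1) ∉ weylK a) : cQ a i k = 0 := by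
  simp only [weylK, Set.mem_setOf_eq, not_forall] at h
  obtain ⟨j, m, hm, hiff⟩ := h
  rcases eq_or_ne j i with rfl | hne
  · simp only [Pi.add_apply, Pi.single_eq_same] at hiff
    have h2 := hk j m hm
    have hm0 : m < 0 ∧ m + k j + 1 = 0 := by omega
    rw [cQ, if_pos ⟨m, hm0.1, hm⟩, hm]
    have hc : ((m + k j + 1 : ℤ) : ℂ) = 0 := by rw [hm0.2]; simp
    push_cast at hc ⊢
    linear_combination hc
  · exact absurd (by simpa [Pi.single_eq_of_ne hne] using hk j m hm) hiff

lemma keyP0 {i : Fin N} {k : Fin N → ℤ} (hk : k ∈ weylK a)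
    (h : (k - Pi.single i 1) ∉ weylK a) : cP a i k = 0 := by
  simp only [weylK, Set.mem_setOf_eq, not_forall] at h
  obtain ⟨j, m, hm, hiff⟩ := h
  rcases eq_or_ne j i with rfl | hne
  · simp only [Pi.sub_apply, Pi.single_eq_same] at hiff
    have h2 := hk j m hm
    have hm0 : ¬ m < 0 ∧ m + k j = 0 := by omega
    have hneg : ¬ ∃ m' : ℤ, m' < 0 ∧ a j = (m' : ℂ) := by
      rintro ⟨m', hm'0, hm'⟩
      have : (m' : ℂ) = (m : ℂ) := by rw [← hm', ← hm]
      have : m' = m := by exact_mod_cast this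
      omega
    rw [cP, if_neg hneg, hm]
    have hc : ((m + k j : ℤ) : ℂ) = 0 := by rw [hm0.2]; simp
    push_cast at hc ⊢
    linear_combination hc
  · exact absurd (by simpa [Pi.single_eq_of_ne hne] using hk j m hm) hiff

end WeylAux

namespace WeylAux

variable {N : ℕ} (a : Fin N → ℂ)

/-- inclusion into the full Finsupp space -/
noncomputable def iota : weylW a →ₗ[ℂ] ((Fin N → ℤ) →₀ ℂ) :=
  Finsupp.lmapDomain ℂ ℂ (Subtype.val : ↥(weylK a) → Fin N → ℤ)

lemma iota_injective : Function.Injective (iota a) :=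
  Finsupp.mapDomain_injective Subtype.val_injective

lemma iota_single (k : ↥(weylK a)) (c : ℂ) :
    iota a (Finsupp.single k c) = Finsupp.single (k : Fin N → ℤ) c := by
  simp [iota, Finsupp.lmapDomain_apply, Finsupp.mapDomain_single]

/-- total Q operator -/
noncomputable def Qt (i : Fin N) : Module.End ℂ ((Fin N → ℤ) →₀ ℂ) :=
  Finsupp.lsum ℂ fun k : Fin N → ℤ => cQ a i k • Finsupp.lsingle (k + Pi.single i 1)

noncomputable def Pt (i : Fin N) : Module.End ℂ ((Fin N → ℤ) →₀ ℂ) :=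
  Finsupp.lsum ℂ fun k : Fin N → ℤ => cP a i k • Finsupp.lsingle (k - Pi.single i 1)

lemma Qt_single (i : Fin N) (k : Fin N → ℤ) (c : ℂ) :
    Qt a i (Finsupp.single k c) = cQ a i k • Finsupp.single (k + Pi.single i 1) c := by
  rw [Qt, Finsupp.lsum_single]; rfl

lemma Pt_single (i : Fin N) (k : Fin N → ℤ) (c : ℂ) :
    Pt a i (Finsupp.single k c) = cP a i k • Finsupp.single (k - Pi.single i 1) c := by
  rw [Pt, Finsupp.lsum_single]; rfl

lemma iota_Q (i : Fin N) : (iota a) ∘ₗ (weylQ a i) = (Qt a i) ∘ₗ (iota a) := by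
  apply Finsupp.lhom_ext
  intro k c
  simp only [LinearMap.comp_apply, weylQ_single, iota_single, Qt_single, map_smul]
  split_ifs with h
  · rw [iota_single]
  · rw [keyQ0 a k.2 h]
    simp

lemma iota_P (i : Fin N) : (iota a) ∘ₗ (weylP a i) = (Pt a i) ∘ₗ (iota a) := by
  apply Finsupp.lhom_ext
  intro k c
  simp only [LinearMap.comp_apply, weylP_single, iota_single, Pt_single, map_smul]
  split_ifs with h
  · rw [iota_single]
  · rw [keyP0 a k.2 h]
    simp

end WeylAux
namespace WeylAux

variable {N : ℕ} (a : Fin N → ℂ)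

lemma Qt_comm (i j : Fin N) : (Qt a i) ∘ₗ (Qt a j) = (Qt a j) ∘ₗ (Qt a i) := by
  apply Finsupp.lhom_ext
  intro k c
  simp only [LinearMap.comp_apply, Qt_single, map_smul]
  rcases eq_or_ne i j with rfl | h
  · rfl
  · rw [cQ_congr a (k := k + Pi.single j 1) (k' := k) (by simp [Pi.single_eq_of_ne h]),
      cQ_congr a (k := k + Pi.single i 1) (k' := k) (by simp [Pi.single_eq_of_ne h.symm])]
    rw [smul_comm]
    congr 2
    abel

lemma Pt_comm (i j : Fin N) : (Pt a i) ∘ₗ (Pt a j) = (Pt a j) ∘ₗ (Pt a i) := by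
  apply Finsupp.lhom_ext
  intro k c
  simp only [LinearMap.comp_apply, Pt_single, map_smul]
  rcases eq_or_ne i j with rfl | h
  · rfl
  · rw [cP_congr a (k := k - Pi.single j 1) (k' := k) (by simp [Pi.single_eq_of_ne h]),
      cP_congr a (k := k - Pi.single i 1) (k' := k) (by simp [Pi.single_eq_of_ne h.symm])]
    rw [smul_comm]
    congr 2
    abel

lemma PQt_comm (i j : Fin N) :
    (Pt a i) ∘ₗ (Qt a j) - (Qt a j) ∘ₗ (Pt a i)
      = if i = j then LinearMap.id else 0 := by
  apply Finsupp.lhom_ext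
  intro k c
  simp only [LinearMap.sub_apply, LinearMap.comp_apply, Qt_single, Pt_single, map_smul]
  rcases eq_or_ne i j with rfl | h
  · simp only [if_pos rfl, LinearMap.id_apply]
    have hpt : k + Pi.single i 1 - Pi.single i 1 = k := by abel
    have hpt2 : k - Pi.single i 1 + Pi.single i 1 = k := by abel
    rw [hpt, hpt2]
    rw [smul_smul, smul_smul, ← sub_smul]
    have hco : cQ a i k * cP a i (k + Pi.single i 1)
        - cP a i k * cQ a i (k - Pi.single i 1) = 1 := by
      simp only [cQ, cP, Pi.add_apply, Pi.sub_apply, Pi.single_eq_same]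
      split_ifs with hn
      · push_cast
        ring
      · push_cast
        ring
    rw [hco, one_smul]
    simp
  · rw [if_neg h]
    rw [cP_congr a (k := k + Pi.single j 1) (k' := k) (by simp [Pi.single_eq_of_ne h]),
      cQ_congr a (k := k - Pi.single i 1) (k' := k) (by simp [Pi.single_eq_of_ne h.symm])]
    have hpt : k + Pi.single j 1 - Pi.single i 1 = k - Pi.single i 1 + Pi.single j 1 := by abel
    rw [hpt, smul_smul, smul_smul, mul_comm, sub_self]
    rfl

end WeylAux
namespace WeylAux

variable {N : ℕ} (a : Fin N → ℂ)

lemma cancel {f g : Module.End ℂ (weylW a)}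
    (h : (iota a) ∘ₗ f = (iota a) ∘ₗ g) : f = g :=
  LinearMap.ext fun v => iota_injective a (LinearMap.congr_fun h v)

lemma iotaQQ (i j : Fin N) :
    iota a ∘ₗ (weylQ a i ∘ₗ weylQ a j) = (Qt a i ∘ₗ Qt a j) ∘ₗ iota a := by
  calc iota a ∘ₗ (weylQ a i ∘ₗ weylQ a j)
      = (iota a ∘ₗ weylQ a i) ∘ₗ weylQ a j := by rw [LinearMap.comp_assoc]
    _ = Qt a i ∘ₗ (iota a ∘ₗ weylQ a j) := by rw [iota_Q, LinearMap.comp_assoc]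
    _ = (Qt a i ∘ₗ Qt a j) ∘ₗ iota a := by rw [iota_Q, LinearMap.comp_assoc]

lemma iotaPP (i j : Fin N) :
    iota a ∘ₗ (weylP a i ∘ₗ weylP a j) = (Pt a i ∘ₗ Pt a j) ∘ₗ iota a := by
  calc iota a ∘ₗ (weylP a i ∘ₗ weylP a j)
      = (iota a ∘ₗ weylP a i) ∘ₗ weylP a j := by rw [LinearMap.comp_assoc]
    _ = Pt a i ∘ₗ (iota a ∘ₗ weylP a j) := by rw [iota_P, LinearMap.comp_assoc]
    _ = (Pt a i ∘ₗ Pt a j) ∘ₗ iota a := by rw [iota_P, LinearMap.comp_assoc]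

lemma lieQQ (i j : Fin N) : ⁅weylQ a i, weylQ a j⁆ = 0 := by
  have hlie : ⁅weylQ a i, weylQ a j⁆
      = weylQ a i * weylQ a j - weylQ a j * weylQ a i := rfl
  rw [hlie, Module.End.mul_eq_comp, Module.End.mul_eq_comp]
  refine sub_eq_zero_of_eq (cancel a ?_)
  rw [iotaQQ, iotaQQ, Qt_comm]

lemma liePP (i j : Fin N) : ⁅weylP a i, weylP a j⁆ = 0 := by
  have hlie : ⁅weylP a i, weylP a j⁆
      = weylP a i * weylP a j - weylP a j * weylP a i := rfl
  rw [hlie, Module.End.mul_eq_comp, Module.End.mul_eq_comp]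
  refine sub_eq_zero_of_eq (cancel a ?_)
  rw [iotaPP, iotaPP, Pt_comm]

lemma iota_comp_sub (f g : Module.End ℂ (weylW a)) :
    iota a ∘ₗ (f - g) = iota a ∘ₗ f - iota a ∘ₗ g := by
  ext v
  simp

lemma iotaPQ (i j : Fin N) :
    iota a ∘ₗ (weylP a i ∘ₗ weylQ a j) = (Pt a i ∘ₗ Qt a j) ∘ₗ iota a := by
  calc iota a ∘ₗ (weylP a i ∘ₗ weylQ a j)
      = (iota a ∘ₗ weylP a i) ∘ₗ weylQ a j := by rw [LinearMap.comp_assoc]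
    _ = Pt a i ∘ₗ (iota a ∘ₗ weylQ a j) := by rw [iota_P, LinearMap.comp_assoc]
    _ = (Pt a i ∘ₗ Qt a j) ∘ₗ iota a := by rw [iota_Q, LinearMap.comp_assoc]

lemma iotaQP (i j : Fin N) :
    iota a ∘ₗ (weylQ a j ∘ₗ weylP a i) = (Qt a j ∘ₗ Pt a i) ∘ₗ iota a := by
  calc iota a ∘ₗ (weylQ a j ∘ₗ weylP a i)
      = (iota a ∘ₗ weylQ a j) ∘ₗ weylP a i := by rw [LinearMap.comp_assoc]
    _ = Qt a j ∘ₗ (iota a ∘ₗ weylP a i) := by rw [iota_Q, LinearMap.comp_assoc]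
    _ = (Qt a j ∘ₗ Pt a i) ∘ₗ iota a := by rw [iota_P, LinearMap.comp_assoc]

lemma liePQ (i j : Fin N) :
    ⁅weylP a i, weylQ a j⁆ = if i = j then 1 else 0 := by
  have hlie : ⁅weylP a i, weylQ a j⁆
      = weylP a i * weylQ a j - weylQ a j * weylP a i := rfl
  rw [hlie, Module.End.mul_eq_comp, Module.End.mul_eq_comp]
  rcases eq_or_ne i j with rfl | h
  · rw [if_pos rfl]
    apply cancel
    rw [iota_comp_sub, iotaPQ, iotaQP, ← LinearMap.sub_comp, PQt_comm, if_pos rfl]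
    ext v
    simp [Module.End.one_apply]
  · rw [if_neg h]
    apply cancel
    rw [iota_comp_sub, iotaPQ, iotaQP, ← LinearMap.sub_comp, PQt_comm, if_neg h]
    ext v
    simp

lemma prodQP (i : Fin N) (k : Fin N → ℤ) :
    cQ a i k * cP a i (k + Pi.single i 1) = a i + (k i : ℂ) + 1 := by
  simp only [cQ, cP, Pi.add_apply, Pi.single_eq_same]
  split_ifs with hn
  · push_cast; ring
  · push_cast; ring

lemma D_single (i : Fin N) (k : ↥(weylK a)) (c : ℂ) :
    weylP a i (weylQ a i (Finsupp.single k c)) =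
      (a i + (((k : Fin N → ℤ) i : ℤ) : ℂ) + 1) • Finsupp.single k c := by
  apply iota_injective a
  have h1 : iota a (weylQ a i (Finsupp.single k c)) = Qt a i (iota a (Finsupp.single k c)) :=
    LinearMap.congr_fun (iota_Q a i) _
  have h2 : iota a (weylP a i (weylQ a i (Finsupp.single k c)))
      = Pt a i (iota a (weylQ a i (Finsupp.single k c))) :=
    LinearMap.congr_fun (iota_P a i) _
  rw [h2, h1, map_smul, iota_single, Qt_single, map_smul, Pt_single]
  have hpt : (k : Fin N → ℤ) + Pi.single i 1 - Pi.single i 1 = (k : Fin N → ℤ) := by abel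
  rw [hpt, smul_smul, prodQP]

lemma D_apply (i : Fin N) (v : weylW a) (k : ↥(weylK a)) :
    (weylP a i (weylQ a i v)) k = (a i + (((k : Fin N → ℤ) i : ℤ) : ℂ) + 1) * v k := by
  induction v using Finsupp.induction_linear with
  | zero => simp
  | add f g hf hg => simp [map_add, Finsupp.add_apply, hf, hg, mul_add]
  | single l c =>
    rw [D_single]
    rcases eq_or_ne l k with rfl | h
    · simp
    · simp [Finsupp.single_apply, h, Finsupp.smul_apply]

end WeylAux
namespace WeylAux

variable {N : ℕ} (a : Fin N → ℂ)

lemma cQ_ne_zero {i : Fin N} {k : Fin N → ℤ} (h : (k + Pi.single i 1) ∈ weylK a) :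
    cQ a i k ≠ 0 := by
  rw [cQ]
  split_ifs with hn
  · obtain ⟨m, hm0, hm⟩ := hn
    have h2 := h i m hm
    simp only [Pi.add_apply, Pi.single_eq_same] at h2
    have : m + k i + 1 ≠ 0 := by omega
    rw [hm]
    intro hc
    apply this
    have : ((m + k i + 1 : ℤ) : ℂ) = 0 := by push_cast; linear_combination hc
    exact_mod_cast this
  · exact one_ne_zero

lemma cP_ne_zero {i : Fin N} {k : Fin N → ℤ} (h : (k - Pi.single i 1) ∈ weylK a) :
    cP a i k ≠ 0 := by
  rw [cP]
  split_ifs with hn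
  · exact one_ne_zero
  · by_cases hint : ∃ m : ℤ, a i = (m : ℂ)
    · obtain ⟨m, hm⟩ := hint
      have hm0 : ¬ m < 0 := fun h0 => hn ⟨m, h0, hm⟩
      have h2 := h i m hm
      simp only [Pi.sub_apply, Pi.single_eq_same] at h2
      have : m + k i ≠ 0 := by omega
      rw [hm]
      intro hc
      apply this
      have : ((m + k i : ℤ) : ℂ) = 0 := by push_cast; linear_combination hc
      exact_mod_cast this
    · intro hc
      exact hint ⟨-(k i), by push_cast; linear_combination hc⟩

variable {p : Submodule ℂ (weylW a)}
  (hp : ∀ v ∈ p, ∀ i : Fin N, weylQ a i v ∈ p ∧ weylP a i v ∈ p)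

include hp

lemma stepQ {i : Fin N} {k k' : ↥(weylK a)}
    (hkk : (k' : Fin N → ℤ) = (k : Fin N → ℤ) + Pi.single i 1)
    (h : Finsupp.single k (1:ℂ) ∈ p) : Finsupp.single k' (1:ℂ) ∈ p := by
  have hmem : ((k : Fin N → ℤ) + Pi.single i 1) ∈ weylK a := hkk ▸ k'.2
  have heq : weylQ a i (Finsupp.single k (1:ℂ)) = cQ a i k • Finsupp.single k' 1 := by
    have he : (⟨(k : Fin N → ℤ) + Pi.single i 1, hmem⟩ : ↥(weylK a)) = k' :=
      Subtype.ext hkk.symm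
    rw [weylQ_single, dif_pos hmem, he]
  have hne := cQ_ne_zero a hmem
  have : Finsupp.single k' (1:ℂ) = (cQ a i ↑k)⁻¹ • weylQ a i (Finsupp.single k (1:ℂ)) := by
    rw [heq, inv_smul_smul₀ hne]
  rw [this]
  exact Submodule.smul_mem p _ ((hp _ h i).1)

lemma stepP {i : Fin N} {k k' : ↥(weylK a)}
    (hkk : (k' : Fin N → ℤ) = (k : Fin N → ℤ) - Pi.single i 1)
    (h : Finsupp.single k (1:ℂ) ∈ p) : Finsupp.single k' (1:ℂ) ∈ p := by
  have hmem : ((k : Fin N → ℤ) - Pi.single i 1) ∈ weylK a := hkk ▸ k'.2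
  have heq : weylP a i (Finsupp.single k (1:ℂ)) = cP a i k • Finsupp.single k' 1 := by
    have he : (⟨(k : Fin N → ℤ) - Pi.single i 1, hmem⟩ : ↥(weylK a)) = k' :=
      Subtype.ext hkk.symm
    rw [weylP_single, dif_pos hmem, he]
  have hne := cP_ne_zero a hmem
  have : Finsupp.single k' (1:ℂ) = (cP a i ↑k)⁻¹ • weylP a i (Finsupp.single k (1:ℂ)) := by
    rw [heq, inv_smul_smul₀ hne]
  rw [this]
  exact Submodule.smul_mem p _ ((hp _ h i).2)

lemma connect : ∀ n : ℕ, ∀ k k' : ↥(weylK a),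
    (∑ i : Fin N, ((k : Fin N → ℤ) i - (k' : Fin N → ℤ) i).natAbs) ≤ n →
    Finsupp.single k (1:ℂ) ∈ p → Finsupp.single k' (1:ℂ) ∈ p := by
  intro n
  induction n with
  | zero =>
    intro k k' hsum h
    have hz : ∀ i : Fin N, ((k : Fin N → ℤ) i - (k' : Fin N → ℤ) i).natAbs = 0 := by
      intro i
      have := Finset.sum_eq_zero_iff.mp (Nat.le_zero.mp hsum) i (Finset.mem_univ i)
      exact this
    have : k = k' := by
      apply Subtype.ext
      funext i
      have := hz i
      omega
    rw [← this]
    exact h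
  | succ n ih =>
    intro k k' hsum h
    rcases eq_or_ne k k' with rfl | hne
    · exact h
    have hex : ∃ i : Fin N, (k : Fin N → ℤ) i ≠ (k' : Fin N → ℤ) i := by
      by_contra hc
      push_neg at hc
      exact hne (Subtype.ext (funext hc))
    obtain ⟨i, hi⟩ := hex
    by_cases hlt : (k : Fin N → ℤ) i < (k' : Fin N → ℤ) i
    · set k'' : Fin N → ℤ := (k : Fin N → ℤ) + Pi.single i 1 with hk''
      have hK : k'' ∈ weylK a := by
        intro j m hm
        rcases eq_or_ne j i with rfl | hji
        · have h1 := k.2 j m hm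
          have h2 := k'.2 j m hm
          simp only [hk'', Pi.add_apply, Pi.single_eq_same]
          omega
        · have h1 := k.2 j m hm
          simpa [hk'', Pi.single_eq_of_ne hji] using h1
      have hstep : Finsupp.single (⟨k'', hK⟩ : ↥(weylK a)) (1:ℂ) ∈ p :=
        stepQ a hp rfl h
      refine ih ⟨k'', hK⟩ k' ?_ hstep
      have hsplit : ∀ l : Fin N → ℤ,
          (∑ j : Fin N, (l j - (k' : Fin N → ℤ) j).natAbs)
            = (∑ j ∈ Finset.univ.erase i, (l j - (k' : Fin N → ℤ) j).natAbs)
              + (l i - (k' : Fin N → ℤ) i).natAbs := by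
        intro l
        rw [Finset.sum_erase_add _ _ (Finset.mem_univ i)]
      rw [hsplit] at hsum ⊢
      have hco : ∑ j ∈ Finset.univ.erase i, (k'' j - (k' : Fin N → ℤ) j).natAbs
          = ∑ j ∈ Finset.univ.erase i, ((k : Fin N → ℤ) j - (k' : Fin N → ℤ) j).natAbs := by
        apply Finset.sum_congr rfl
        intro j hj
        have hji : j ≠ i := Finset.ne_of_mem_erase hj
        simp [hk'', Pi.single_eq_of_ne hji]
      rw [hco]
      have hii : ((⟨k'', hK⟩ : ↥(weylK a)) : Fin N → ℤ) i = (k : Fin N → ℤ) i + 1 := by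
        simp [hk'']
      rw [hii]
      omega
    · have hgt : (k' : Fin N → ℤ) i < (k : Fin N → ℤ) i := by omega
      set k'' : Fin N → ℤ := (k : Fin N → ℤ) - Pi.single i 1 with hk''
      have hK : k'' ∈ weylK a := by
        intro j m hm
        rcases eq_or_ne j i with rfl | hji
        · have h1 := k.2 j m hm
          have h2 := k'.2 j m hm
          simp only [hk'', Pi.sub_apply, Pi.single_eq_same]
          omega
        · have h1 := k.2 j m hm
          simpa [hk'', Pi.single_eq_of_ne hji] using h1
      have hstep : Finsupp.single (⟨k'', hK⟩ : ↥(weylK a)) (1:ℂ) ∈ p :=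
        stepP a hp rfl h
      refine ih ⟨k'', hK⟩ k' ?_ hstep
      have hsplit : ∀ l : Fin N → ℤ,
          (∑ j : Fin N, (l j - (k' : Fin N → ℤ) j).natAbs)
            = (∑ j ∈ Finset.univ.erase i, (l j - (k' : Fin N → ℤ) j).natAbs)
              + (l i - (k' : Fin N → ℤ) i).natAbs := by
        intro l
        rw [Finset.sum_erase_add _ _ (Finset.mem_univ i)]
      rw [hsplit] at hsum ⊢
      have hco : ∑ j ∈ Finset.univ.erase i, (k'' j - (k' : Fin N → ℤ) j).natAbs
          = ∑ j ∈ Finset.univ.erase i, ((k : Fin N → ℤ) j - (k' : Fin N → ℤ) j).natAbs := by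
        apply Finset.sum_congr rfl
        intro j hj
        have hji : j ≠ i := Finset.ne_of_mem_erase hj
        simp [hk'', Pi.single_eq_of_ne hji]
      rw [hco]
      have hii : ((⟨k'', hK⟩ : ↥(weylK a)) : Fin N → ℤ) i = (k : Fin N → ℤ) i - 1 := by
        simp [hk'']
      rw [hii]
      omega

lemma extract : ∀ n : ℕ, ∀ v : weylW a, v ∈ p → v ≠ 0 → v.support.card ≤ n →
    ∃ k : ↥(weylK a), Finsupp.single k (1:ℂ) ∈ p := by
  intro n
  induction n with
  | zero =>
    intro v hv hv0 hcard
    exact absurd (Finsupp.support_eq_empty.mp (Finset.card_eq_zero.mp (Nat.le_zero.mp hcard)))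
      hv0
  | succ n ih =>
    intro v hv hv0 hcard
    obtain ⟨k, hk⟩ := Finsupp.support_nonempty_iff.mpr hv0
    by_cases hone : ∀ k' ∈ v.support, k' = k
    · -- v is supported at k only
      have hvk : v k ≠ 0 := Finsupp.mem_support_iff.mp hk
      have hveq : v = Finsupp.single k (v k) := by
        ext l
        rcases eq_or_ne k l with rfl | hne
        · simp
        · rw [Finsupp.single_apply, if_neg hne]
          by_contra hc
          exact hne ((hone l (Finsupp.mem_support_iff.mpr hc)).symm)
      refine ⟨k, ?_⟩
      have : Finsupp.single k (1:ℂ) = (v k)⁻¹ • v := by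
        conv_rhs => rw [hveq]
        simp [Finsupp.smul_single, Finsupp.single_eq_same, smul_eq_mul, inv_mul_cancel₀ hvk]
      rw [this]
      exact Submodule.smul_mem p _ hv
    · push_neg at hone
      obtain ⟨k', hk', hkk'⟩ := hone
      have hex : ∃ i : Fin N, (k : Fin N → ℤ) i ≠ (k' : Fin N → ℤ) i := by
        by_contra hc
        push_neg at hc
        exact hkk' (Subtype.ext (funext fun i => (hc i).symm))
      obtain ⟨i, hi⟩ := hex
      set w : weylW a :=
        weylP a i (weylQ a i v) - (a i + (((k' : Fin N → ℤ) i : ℤ) : ℂ) + 1) • v with hw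
      have hwp : w ∈ p := by
        apply Submodule.sub_mem
        · exact (hp _ ((hp _ hv i).1) i).2
        · exact Submodule.smul_mem p _ hv
      have hwap : ∀ l : ↥(weylK a),
          w l = ((((l : Fin N → ℤ) i : ℤ) : ℂ) - (((k' : Fin N → ℤ) i : ℤ) : ℂ)) * v l := by
        intro l
        rw [hw, Finsupp.sub_apply, Finsupp.smul_apply, smul_eq_mul, D_apply]
        ring
      have hwk' : w k' = 0 := by rw [hwap]; ring
      have hwk : w k ≠ 0 := by
        rw [hwap]
        apply mul_ne_zero
        · intro hc
          apply hi
          have : (((k : Fin N → ℤ) i : ℤ) : ℂ) = (((k' : Fin N → ℤ) i : ℤ) : ℂ) := by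
            linear_combination hc
          exact_mod_cast this
        · exact Finsupp.mem_support_iff.mp hk
      have hw0 : w ≠ 0 := fun hc => hwk (by rw [hc]; rfl)
      have hsub : w.support ⊆ v.support.erase k' := by
        intro l hl
        rw [Finset.mem_erase]
        constructor
        · intro hc
          exact (Finsupp.mem_support_iff.mp hl) (hc ▸ hwk')
        · rw [Finsupp.mem_support_iff]
          intro hc
          exact (Finsupp.mem_support_iff.mp hl) (by rw [hwap, hc, mul_zero])
      have hcard' : w.support.card ≤ n := by
        have h1 := Finset.card_le_card hsub
        have h2 := Finset.card_erase_of_mem hk'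
        omega
      exact ih w hwp hw0 hcard'

end WeylAux

/-- Benkart–Britten–Lemire.  For every `a ∈ ℂ^N`, the prescribed
actions of `q_i` and `p_i` on the space `W(a)` with basis `{x(k) : k ∈ K}` make `W(a)` a
well-defined module over the Weyl algebra `W_N` (the operators satisfy the Weyl relations
`[q_i,q_j] = 0 = [p_i,p_j]`, `[p_i,q_j] = δ_{ij}`, the bracket on `Module.End` being the
commutator), and this module is nonzero and simple: every subspace invariant under all
the `q_i` and `p_i` is `⊥` or `⊤`. -/
theorem stmt_9 (N : ℕ) (a : Fin N → ℂ) :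
    (∀ i j : Fin N, ⁅weylQ a i, weylQ a j⁆ = 0) ∧
    (∀ i j : Fin N, ⁅weylP a i, weylP a j⁆ = 0) ∧
    (∀ i j : Fin N, ⁅weylP a i, weylQ a j⁆ = if i = j then 1 else 0) ∧
    Nontrivial (weylW a) ∧
    (∀ p : Submodule ℂ (weylW a),
      (∀ v ∈ p, ∀ i : Fin N, weylQ a i v ∈ p ∧ weylP a i v ∈ p) → p = ⊥ ∨ p = ⊤) := by
  refine ⟨WeylAux.lieQQ a, WeylAux.liePP a, WeylAux.liePQ a, ?_, ?_⟩
  · have h0 : (0 : Fin N → ℤ) ∈ weylK a := by intro i m hm; simp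
    exact ⟨Finsupp.single ⟨0, h0⟩ 1, 0, fun hc =>
      one_ne_zero (Finsupp.single_eq_zero.mp hc)⟩
  · intro p hp
    by_cases hbot : p = ⊥
    · exact Or.inl hbot
    right
    obtain ⟨v, hv, hv0⟩ := Submodule.exists_mem_ne_zero_of_ne_bot hbot
    obtain ⟨k0, hk0⟩ := WeylAux.extract a hp v.support.card v hv hv0 le_rfl
    rw [eq_top_iff]
    intro u hu
    clear hu
    induction u using Finsupp.induction_linear with
    | zero => exact p.zero_mem
    | add f g hf hg => exact p.add_mem hf hg
    | single k c =>
      have h1 : Finsupp.single k (1:ℂ) ∈ p := WeylAux.connect a hp _ k0 k le_rfl hk0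
      have h2 : Finsupp.single k c = c • Finsupp.single k (1:ℂ) := by
        rw [Finsupp.smul_single, smul_eq_mul, mul_one]
      rw [h2]
      exact p.smul_mem c h1
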